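/- arXiv:2102.06983 — 2 statements merged into one kernel-verified Lean document; each statement's English description precedes it below -/
import Mathlib

section
/- Let N be a normal subgroup of a finite group G and let K be a subgroup of G. Then Pr(K, G) ≤ Pr(KN/N, G/N) · Pr(N ∩ K, N), where KN/N is the image of K in the quotient group G/N and N ∩ K is regarded as a subgroup of N. -/
/-- The relative commuting probability `Pr(K, G)` of a subgroup `K` of a finite group `G`. -/
noncomputable def relCommProb {G : Type*} [Group G] (K : Subgroup G) : ℝ :=
  (Nat.card {p : K × G // Commute (p.1 : G) p.2} : ℝ) /
    ((Nat.card K : ℝ) * (Nat.card G : ℝ))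

namespace RelCommProbAux

variable {G : Type*} [Group G] (N : Subgroup G) [N.Normal] (K : Subgroup G)

open Classical in
/-- choice of a commuting representative in a coset -/
noncomputable def yc (x : G) (v : G ⧸ N) : G :=
  if h : ∃ y : G, Commute x y ∧ QuotientGroup.mk' N y = v then h.choose else 1

lemma yc_spec {x : G} {v : G ⧸ N} (h : ∃ y : G, Commute x y ∧ QuotientGroup.mk' N y = v) :
    Commute x (yc N x v) ∧ QuotientGroup.mk' N (yc N x v) = v := by
  classical rw [yc]; rw [dif_pos h]; exact h.choose_spec

open Classical in
/-- choice of an element of `N ⊓ K` translating `x₀` into the centralizer of `b` -/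
noncomputable def acl (x₀ b : G) : G :=
  if h : ∃ a : G, a ∈ N ⊓ K ∧ Commute (x₀ * a) b then h.choose else 1

omit [N.Normal] in
lemma acl_spec {x₀ b : G} (h : ∃ a : G, a ∈ N ⊓ K ∧ Commute (x₀ * a) b) :
    acl N K x₀ b ∈ N ⊓ K ∧ Commute (x₀ * acl N K x₀ b) b := by
  classical rw [acl]; rw [dif_pos h]; exact h.choose_spec

/-- choice of a representative in `K` of an element of the image of `K` -/
noncomputable def rep (u : ↥(K.map (QuotientGroup.mk' N))) : G :=
  (Subgroup.mem_map.mp u.2).choose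

lemma rep_spec (u : ↥(K.map (QuotientGroup.mk' N))) :
    rep N K u ∈ K ∧ QuotientGroup.mk' N (rep N K u) = (u : G ⧸ N) :=
  (Subgroup.mem_map.mp u.2).choose_spec

section Phi

variable {s : {p : K × G // Commute (p.1 : G) p.2}}

local notation "π" => QuotientGroup.mk' N

lemma mem_N_iff (x : G) : x ∈ N ↔ (QuotientGroup.mk' N) x = 1 :=
  (QuotientGroup.eq_one_iff x).symm

lemma yc_ex (s : {p : K × G // Commute (p.1 : G) p.2}) :
    ∃ y : G, Commute (s.1.1 : G) y ∧ π y = π s.1.2 :=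
  ⟨s.1.2, s.2, rfl⟩

lemma n_spec (s : {p : K × G // Commute (p.1 : G) p.2}) :
    (yc N (s.1.1 : G) (π s.1.2))⁻¹ * s.1.2 ∈ N ∧
      Commute (s.1.1 : G) ((yc N (s.1.1 : G) (π s.1.2))⁻¹ * s.1.2) := by
  obtain ⟨h1, h2⟩ := yc_spec N (yc_ex N K s)
  refine ⟨?_, h1.inv_right.mul_right s.2⟩
  rw [mem_N_iff, map_mul, map_inv, h2, inv_mul_cancel]

lemma a_mem (s : {p : K × G // Commute (p.1 : G) p.2})
    (u : ↥(K.map π)) (hu : (u : G ⧸ N) = π (s.1.1 : G)) :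
    (rep N K u)⁻¹ * (s.1.1 : G) ∈ N ⊓ K := by
  obtain ⟨h1, h2⟩ := rep_spec N K u
  refine Subgroup.mem_inf.mpr ⟨?_, mul_mem (inv_mem h1) s.1.1.2⟩
  rw [mem_N_iff, map_mul, map_inv, h2, hu, inv_mul_cancel]

lemma acl_ex (s : {p : K × G // Commute (p.1 : G) p.2})
    (u : ↥(K.map π)) (hu : (u : G ⧸ N) = π (s.1.1 : G)) :
    ∃ a : G, a ∈ N ⊓ K ∧
      Commute (rep N K u * a) ((yc N (s.1.1 : G) (π s.1.2))⁻¹ * s.1.2) :=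
  ⟨(rep N K u)⁻¹ * (s.1.1 : G), a_mem N K s u hu, by
    rw [mul_inv_cancel_left]; exact (n_spec N K s).2⟩

/-- The injection from commuting pairs of `K × G` into pairs of commuting pairs. -/
noncomputable def Φ (s : {p : K × G // Commute (p.1 : G) p.2}) :
    {p : ↥(K.map π) × (G ⧸ N) // Commute (p.1 : G ⧸ N) p.2} ×
      {p : ↥((N ⊓ K).subgroupOf N) × N // Commute (p.1 : N) p.2} :=
  let x : G := s.1.1
  let y : G := s.1.2
  let u : ↥(K.map π) := ⟨π x, Subgroup.mem_map_of_mem _ s.1.1.2⟩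
  let x₀ : G := rep N K u
  let n : G := (yc N x (π y))⁻¹ * y
  let a' : G := acl N K x₀ n
  let c : G := a'⁻¹ * (x₀⁻¹ * x)
  have hn : n ∈ N ∧ Commute x n := n_spec N K s
  have ha' : a' ∈ N ⊓ K ∧ Commute (x₀ * a') n := acl_spec N K (acl_ex N K s u rfl)
  have hc : c ∈ N ⊓ K := mul_mem (inv_mem ha'.1) (a_mem N K s u rfl)
  have hcn : Commute c n := by
    have h1 : Commute (x₀ * a')⁻¹ n := ha'.2.inv_left
    have h2 : Commute ((x₀ * a')⁻¹ * x) n := h1.mul_left hn.2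
    have : (x₀ * a')⁻¹ * x = c := by simp [c, mul_assoc]
    rwa [this] at h2
  ⟨⟨(u, π y), s.2.map (π)⟩,
    ⟨(⟨⟨c, hc.1⟩, by rwa [Subgroup.mem_subgroupOf]⟩, ⟨n, hn.1⟩),
      Subtype.ext hcn⟩⟩

lemma Φ_injective : Function.Injective (Φ N K) := by
  intro s₁ s₂ h
  have h1 : (((Φ N K s₁).1.1.1 : G ⧸ N)) = ((Φ N K s₂).1.1.1 : G ⧸ N) := by rw [h]
  have h2 : ((Φ N K s₁).1.1.2 : G ⧸ N) = (Φ N K s₂).1.1.2 := by rw [h]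
  have h3 : (((Φ N K s₁).2.1.1 : N) : G) = (((Φ N K s₂).2.1.1 : N) : G) := by rw [h]
  have h4 : (((Φ N K s₁).2.1.2 : N) : G) = (((Φ N K s₂).2.1.2 : N) : G) := by rw [h]
  simp only [Φ] at h1 h2 h3 h4
  -- notation
  set x₁ : G := (s₁.1.1 : G) with hx₁
  set x₂ : G := (s₂.1.1 : G) with hx₂
  set y₁ : G := s₁.1.2
  set y₂ : G := s₂.1.2
  have hu : (⟨π x₁, Subgroup.mem_map_of_mem _ s₁.1.1.2⟩ : ↥(K.map π)) =
      ⟨π x₂, Subgroup.mem_map_of_mem _ s₂.1.1.2⟩ := Subtype.ext h1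
  have hx : x₁ = x₂ := by
    have e₁ : x₁ = rep N K ⟨π x₁, Subgroup.mem_map_of_mem _ s₁.1.1.2⟩ *
        (acl N K (rep N K ⟨π x₁, Subgroup.mem_map_of_mem _ s₁.1.1.2⟩)
            ((yc N x₁ (π y₁))⁻¹ * y₁) *
          ((acl N K (rep N K ⟨π x₁, Subgroup.mem_map_of_mem _ s₁.1.1.2⟩)
              ((yc N x₁ (π y₁))⁻¹ * y₁))⁻¹ *
            ((rep N K ⟨π x₁, Subgroup.mem_map_of_mem _ s₁.1.1.2⟩)⁻¹ * x₁))) :=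
      (by rw [mul_inv_cancel_left, mul_inv_cancel_left])
    have e₂ : x₂ = rep N K ⟨π x₂, Subgroup.mem_map_of_mem _ s₂.1.1.2⟩ *
        (acl N K (rep N K ⟨π x₂, Subgroup.mem_map_of_mem _ s₂.1.1.2⟩)
            ((yc N x₂ (π y₂))⁻¹ * y₂) *
          ((acl N K (rep N K ⟨π x₂, Subgroup.mem_map_of_mem _ s₂.1.1.2⟩)
              ((yc N x₂ (π y₂))⁻¹ * y₂))⁻¹ *
            ((rep N K ⟨π x₂, Subgroup.mem_map_of_mem _ s₂.1.1.2⟩)⁻¹ * x₂))) :=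
      (by rw [mul_inv_cancel_left, mul_inv_cancel_left])
    rw [e₁, h3, hu, h4, ← e₂]
  have hy : y₁ = y₂ := by
    have e₁ : y₁ = yc N x₁ (π y₁) * ((yc N x₁ (π y₁))⁻¹ * y₁) :=
      (mul_inv_cancel_left _ _).symm
    have e₂ : y₂ = yc N x₂ (π y₂) * ((yc N x₂ (π y₂))⁻¹ * y₂) :=
      (mul_inv_cancel_left _ _).symm
    rw [e₁, h4, hx, h2, ← e₂]
  exact Subtype.ext (Prod.ext (Subtype.ext hx) hy)

end Phi

end RelCommProbAux

open RelCommProbAux in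
theorem relCommProb_quotient_inequality
    {G : Type*} [Group G] [Finite G] (N : Subgroup G) [N.Normal] (K : Subgroup G) :
    relCommProb K ≤
      relCommProb (K.map (QuotientGroup.mk' N)) * relCommProb ((N ⊓ K).subgroupOf N) := by
  classical
  set π := QuotientGroup.mk' N
  -- cardinality of the commuting-pair sets
  have key : Nat.card {p : K × G // Commute (p.1 : G) p.2} ≤
      Nat.card {p : ↥(K.map π) × (G ⧸ N) // Commute (p.1 : G ⧸ N) p.2} *
        Nat.card {p : ↥((N ⊓ K).subgroupOf N) × N // Commute (p.1 : N) p.2} := by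
    rw [← Nat.card_prod]
    exact Nat.card_le_card_of_injective _ (Φ_injective N K)
  -- cardinality identities
  have hG : Nat.card G = Nat.card (G ⧸ N) * Nat.card N :=
    Subgroup.card_eq_card_quotient_mul_card_subgroup N
  have hNK : Nat.card ((N ⊓ K).subgroupOf N) = Nat.card (↥(N ⊓ K)) :=
    Nat.card_congr (Subgroup.subgroupOfEquivOfLe inf_le_left).toEquiv
  have hK : Nat.card K = Nat.card (K.map π) * Nat.card ((N ⊓ K).subgroupOf N) := by
    have h1 : Nat.card K =
        Nat.card (K ⧸ (π.domRestrict K).ker) * Nat.card ((π.domRestrict K).ker) :=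
      Subgroup.card_eq_card_quotient_mul_card_subgroup _
    have h2 : Nat.card (K ⧸ (π.domRestrict K).ker) = Nat.card (π.domRestrict K).range :=
      Nat.card_congr (QuotientGroup.quotientKerEquivRange (π.domRestrict K)).toEquiv
    have h3 : (π.domRestrict K).range = K.map π := MonoidHom.restrict_range K π
    have h4 : (π.domRestrict K).ker = (N ⊓ K).subgroupOf K := by
      rw [MonoidHom.ker_domRestrict, QuotientGroup.ker_mk', Subgroup.inf_subgroupOf_right]
    have h5 : Nat.card ((N ⊓ K).subgroupOf K) = Nat.card (↥(N ⊓ K)) :=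
      Nat.card_congr (Subgroup.subgroupOfEquivOfLe inf_le_right).toEquiv
    rw [h1, h2, h3, h4, h5, hNK]
  -- now the real-number computation
  rw [relCommProb, relCommProb, relCommProb, div_mul_div_comm]
  have hd : ((Nat.card K : ℝ) * (Nat.card G : ℝ)) =
      (Nat.card ↥(K.map π) * Nat.card (G ⧸ N)) *
        (Nat.card ((N ⊓ K).subgroupOf N) * Nat.card N) := by
    rw [hK, hG]; push_cast; ring
  rw [hd]
  have hpos : (0:ℝ) < (Nat.card ↥(K.map π) * Nat.card (G ⧸ N)) *
      (Nat.card ((N ⊓ K).subgroupOf N) * Nat.card N) := by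
    have := Nat.card_pos (α := ↥(K.map π))
    have := Nat.card_pos (α := G ⧸ N)
    have := Nat.card_pos (α := ((N ⊓ K).subgroupOf N))
    have := Nat.card_pos (α := N)
    positivity
  gcongr
  exact_mod_cast key
end

section
/- Let G be a finite group and let X be a subset of G which is symmetric (X = X⁻¹, i.e., x ∈ X implies x⁻¹ ∈ X) and contains the identity element. If r is a positive integer such that (r+1)·|X| > |G|, then the subgroup generated by X equals X^{3r}, the set of all products of 3r elements of X. -/
open scoped Pointwise

private lemma pow_sub_closure {G : Type*} [Group G] (X : Set G) (n : ℕ) :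
    X ^ n ⊆ (Subgroup.closure X : Set G) := by
  induction n with
  | zero =>
    simp only [pow_zero]
    intro x hx
    rw [Set.mem_one] at hx
    exact hx ▸ one_mem _
  | succ n ih =>
    rw [pow_succ]
    rintro z ⟨a, ha, b, hb, rfl⟩
    exact mul_mem (ih ha) (Subgroup.subset_closure hb)

private lemma pow_stab {G : Type*} [Group G] (X : Set G) {m : ℕ}
    (h : X ^ (m + 1) = X ^ m) : ∀ k, X ^ (m + k) = X ^ m := by
  intro k
  induction k with
  | zero => rfl
  | succ k ih =>
    calc X ^ (m + (k + 1)) = X ^ (m + k) * X := by rw [← pow_succ]; ring_nf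
    _ = X ^ m * X := by rw [ih]
    _ = X ^ m := by rw [← pow_succ, h]

private lemma closure_eq_pow {G : Type*} [Group G] (X : Set G)
    (h1 : (1 : G) ∈ X) (hsym : X⁻¹ = X) {m : ℕ} (hm : 1 ≤ m)
    (h : X ^ (m + 1) = X ^ m) : (Subgroup.closure X : Set G) = X ^ m := by
  refine subset_antisymm ?_ (pow_sub_closure X m)
  have hstab : ∀ k, X ^ (m + k) = X ^ m := pow_stab X h
  have hone : (1 : G) ∈ X ^ m := Set.pow_subset_pow_right h1 (Nat.zero_le m) (by
    simp [Set.mem_one])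
  have hmul : ∀ a b : G, a ∈ X ^ m → b ∈ X ^ m → a * b ∈ X ^ m := by
    intro a b ha hb
    have : a * b ∈ X ^ m * X ^ m := Set.mul_mem_mul ha hb
    rwa [← pow_add, hstab m] at this
  have hinv : ∀ a : G, a ∈ X ^ m → a⁻¹ ∈ X ^ m := by
    intro a ha
    have : a⁻¹ ∈ (X ^ m)⁻¹ := Set.inv_mem_inv.2 ha
    rwa [← inv_pow, hsym] at this
  let S : Subgroup G :=
    { carrier := X ^ m
      one_mem' := hone
      mul_mem' := fun ha hb => hmul _ _ ha hb
      inv_mem' := fun ha => hinv _ ha }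
  have hXS : X ⊆ (S : Set G) := by
    intro x hx
    have : x ∈ X ^ 1 := by simpa [pow_one] using hx
    exact Set.pow_subset_pow_right h1 hm this
  exact (Subgroup.closure_le S).2 hXS

theorem symmetric_set_generation
    {G : Type*} [Group G] [Finite G] (X : Set G) (h1 : (1 : G) ∈ X) (hsym : X⁻¹ = X)
    (r : ℕ) (hr : 0 < r) (hcard : (r + 1) * X.ncard > Nat.card G) :
    (Subgroup.closure X : Set G) = X ^ (3 * r) := by
  by_cases hstab : ∃ i, 1 ≤ i ∧ i ≤ r ∧ X ^ (3 * i + 1) = X ^ (3 * i)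
  · obtain ⟨i, hi1, hir, heq⟩ := hstab
    have hcl := closure_eq_pow X h1 hsym (by omega : 1 ≤ 3 * i) heq
    refine subset_antisymm ?_ (pow_sub_closure X _)
    rw [hcl]
    exact Set.pow_subset_pow_right h1 (by omega)
  · push_neg at hstab
    exfalso
    have hex : ∀ i : ℕ, ∃ z : G, (1 ≤ i ∧ i ≤ r → z ∈ X ^ (3 * i + 1) ∧ z ∉ X ^ (3 * i)) ∧
        (i = 0 → z = 1) := by
      intro i
      rcases Nat.eq_zero_or_pos i with h0 | hpos
      · exact ⟨1, fun h => absurd h0 (by omega), fun _ => rfl⟩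
      · by_cases hir : i ≤ r
        · have hne := hstab i hpos hir
          have hsub : X ^ (3 * i) ⊆ X ^ (3 * i + 1) :=
            Set.pow_subset_pow_right h1 (Nat.le_succ _)
          obtain ⟨z, hz1, hz2⟩ := Set.exists_of_ssubset
            (hsub.ssubset_of_ne (fun h => hne h.symm))
          exact ⟨z, fun _ => ⟨hz1, hz2⟩, fun h => by omega⟩
        · exact ⟨1, fun h => absurd h.2 hir, fun h => by omega⟩
    choose y hy hy0 using hex
    have hymem : ∀ i, i ≤ r → y i ∈ X ^ (3 * i + 1) := by
      intro i hir
      rcases Nat.eq_zero_or_pos i with h0 | hpos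
      · subst h0
        rw [hy0 0 rfl]
        simpa using Set.one_mem_pow (n := 3 * 0 + 1) h1
      · exact (hy i ⟨hpos, hir⟩).1
    have hynot : ∀ i, 1 ≤ i → i ≤ r → y i ∉ X ^ (3 * i) := fun i h1i hir =>
      (hy i ⟨h1i, hir⟩).2
    -- key: cosets (y i) * X are pairwise disjoint
    have hkey : ∀ i j : ℕ, i < j → j ≤ r → ∀ a ∈ X, ∀ b ∈ X, y i * a ≠ y j * b := by
      intro i j hij hjr a ha b hb habs
      apply hynot j (by omega) hjr
      have : y j = y i * a * b⁻¹ := by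
        rw [habs]; group
      rw [this]
      have hb' : b⁻¹ ∈ X := by rw [← hsym]; exact Set.inv_mem_inv.2 hb
      have h2 : y i * a ∈ X ^ (3 * i + 1) * X := Set.mul_mem_mul (hymem i (by omega)) ha
      have h3 : y i * a * b⁻¹ ∈ X ^ (3 * i + 1) * X * X := Set.mul_mem_mul h2 hb'
      rw [← pow_succ, ← pow_succ] at h3
      exact Set.pow_subset_pow_right h1 (by omega : 3 * i + 1 + 1 + 1 ≤ 3 * j) h3
    -- build an injection Fin (r+1) × X → G
    have hXfin : X.Finite := Set.toFinite X
    set F : Fin (r + 1) × X → G := fun p => y p.1 * (p.2 : G) with hF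
    have hinj : Function.Injective F := by
      rintro ⟨i, a, ha⟩ ⟨j, b, hb⟩ hFeq
      simp only [hF] at hFeq
      rcases lt_trichotomy (i : ℕ) (j : ℕ) with h | h | h
      · exact absurd hFeq (hkey i j h (by omega) a ha b hb)
      · have hij : i = j := Fin.ext h
        subst hij
        have hab : a = b := mul_left_cancel hFeq
        simp [hab]
      · exact absurd hFeq.symm (hkey j i h (by omega) b hb a ha)
    have hle : Nat.card (Fin (r + 1) × X) ≤ Nat.card G :=
      Nat.card_le_card_of_injective F hinj
    rw [Nat.card_prod, Nat.card_eq_fintype_card, Fintype.card_fin,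
      Nat.card_coe_set_eq] at hle
    omega
end
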